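/- Let k ≥ 1 and 0 ≤ n ≤ k+1. For any two size-n subsets S, S' of [0,k] there is a finite sequence S = S_0, S_1, …, S_m = S' of size-n subsets of [0,k] such that for each i, the subsets S_i and S_{i+1} are either equal or close. In other words, the graph whose vertices are the size-n subsets of [0,k] and whose edges join pairs of close subsets is connected. -/
import Mathlib


/-- Two finite sets of integers are *close* if there is a bijection `g : S → S'`
with `g i ∈ {i-1, i, i+1}` for every `i ∈ S`. -/
def IsClose (S S' : Finset ℤ) : Prop :=
  ∃ g : ℤ → ℤ, Set.BijOn g ↑S ↑S' ∧ ∀ i ∈ S, g i = i - 1 ∨ g i = i ∨ g i = i + 1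

lemma isClose_symm {S S' : Finset ℤ} (h : IsClose S S') : IsClose S' S := by
  obtain ⟨g, hbij, hprop⟩ := h
  refine ⟨Function.invFunOn g ↑S, hbij.symm hbij.invOn_invFunOn.symm, ?_⟩
  intro j hj
  have hjmem : Function.invFunOn g ↑S j ∈ (S : Set ℤ) :=
    Function.invFunOn_mem (hbij.surjOn (by exact_mod_cast hj))
  have hgj : g (Function.invFunOn g ↑S j) = j :=
    hbij.invOn_invFunOn.2 (by exact_mod_cast hj)
  rcases hprop _ (by exact_mod_cast hjmem) with h1 | h1 | h1 <;> rw [hgj] at h1 <;> omega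

/-- Chain relation with fixed parameters. -/
def Chain (k : ℤ) (n : ℕ) (S S' : Finset ℤ) : Prop :=
  ∃ (m : ℕ) (f : ℕ → Finset ℤ),
    f 0 = S ∧ f m = S' ∧
    (∀ i ≤ m, f i ⊆ Finset.Icc 0 k ∧ (f i).card = n) ∧
    (∀ i < m, f i = f (i + 1) ∨ IsClose (f i) (f (i + 1)))

lemma chain_refl {k : ℤ} {n : ℕ} {S : Finset ℤ} (hS : S ⊆ Finset.Icc 0 k)
    (hc : S.card = n) : Chain k n S S := by
  refine ⟨0, fun _ => S, rfl, rfl, ?_, ?_⟩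
  · intro i _; exact ⟨hS, hc⟩
  · intro i hi; omega

lemma chain_trans {k : ℤ} {n : ℕ} {S T U : Finset ℤ}
    (h1 : Chain k n S T) (h2 : Chain k n T U) : Chain k n S U := by
  obtain ⟨m, f, hf0, hfm, hfmem, hfstep⟩ := h1
  obtain ⟨m', f', hf'0, hf'm, hf'mem, hf'step⟩ := h2
  refine ⟨m + m', fun i => if i ≤ m then f i else f' (i - m), ?_, ?_, ?_, ?_⟩
  · simp [hf0]
  · rcases Nat.eq_zero_or_pos m' with h | h
    · subst h; simp [hfm, ← hf'0, hf'm]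
    · have : ¬ (m + m' ≤ m) := by omega
      simp only [if_neg this]
      rw [show m + m' - m = m' from by omega, hf'm]
  · intro i hi
    by_cases h : i ≤ m
    · simp only [if_pos h]; exact hfmem i h
    · simp only [if_neg h]; exact hf'mem (i - m) (by omega)
  · intro i hi
    by_cases h : i + 1 ≤ m
    · simp only [if_pos (by omega : i ≤ m), if_pos h]
      exact hfstep i (by omega)
    · by_cases h2 : i ≤ m
      · have him : i = m := by omega
        simp only [if_pos h2, if_neg h]
        rw [show i + 1 - m = 1 from by omega, him, hfm, ← hf'0]
        exact hf'step 0 (by omega)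
      · simp only [if_neg h2, if_neg h]
        rw [show i + 1 - m = (i - m) + 1 from by omega]
        exact hf'step (i - m) (by omega)

lemma chain_symm {k : ℤ} {n : ℕ} {S T : Finset ℤ} (h : Chain k n S T) : Chain k n T S := by
  obtain ⟨m, f, hf0, hfm, hfmem, hfstep⟩ := h
  refine ⟨m, fun i => f (m - i), by simp [hfm], by simp [hf0], ?_, ?_⟩
  · intro i hi; exact hfmem (m - i) (by omega)
  · intro i hi
    have h1 : m - i = (m - (i + 1)) + 1 := by omega
    show f (m - i) = f (m - (i+1)) ∨ IsClose (f (m - i)) (f (m - (i+1)))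
    rw [h1]
    rcases hfstep (m - (i + 1)) (by omega) with h | h
    · exact Or.inl h.symm
    · exact Or.inr (isClose_symm h)

/-- Moving a single element down by one is a close step. -/
lemma isClose_step {S : Finset ℤ} {x : ℤ} (hx : x ∈ S) (hx1 : x - 1 ∉ S) :
    IsClose S (insert (x - 1) (S.erase x)) := by
  refine ⟨fun i => if i = x then x - 1 else i, ?_, ?_⟩
  · constructor
    · intro i hi
      simp only [Finset.coe_insert, Set.mem_insert_iff]
      by_cases h : i = x
      · simp [h]
      · simp only [if_neg h]
        right
        exact_mod_cast Finset.mem_erase.2 ⟨h, by exact_mod_cast hi⟩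
    constructor
    · intro i hi j hj hij
      simp only at hij
      by_cases h1 : i = x <;> by_cases h2 : j = x
      · rw [h1, h2]
      · rw [if_pos h1, if_neg h2] at hij
        exact absurd (hij ▸ hj) (by exact_mod_cast hx1)
      · rw [if_neg h1, if_pos h2] at hij
        exact absurd (hij ▸ hi) (by exact_mod_cast hx1)
      · rwa [if_neg h1, if_neg h2] at hij
    · intro j hj
      simp only [Finset.coe_insert, Set.mem_insert_iff, Finset.mem_coe,
        Finset.mem_erase] at hj
      rcases hj with h | ⟨hne, hmem⟩
      · exact ⟨x, by exact_mod_cast hx, by simp [h]⟩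
      · exact ⟨j, by exact_mod_cast hmem, by simp [if_neg hne]⟩
  · intro i _
    by_cases h : i = x
    · left; simp [h]
    · right; left; simp [h]

lemma exists_movable {S : Finset ℤ} {n : ℕ} (hcard : S.card = n)
    (hpos : ∀ x ∈ S, 0 ≤ x) (hne : S ≠ Finset.Icc 0 ((n : ℤ) - 1)) :
    ∃ x ∈ S, 1 ≤ x ∧ x - 1 ∉ S := by
  by_contra hcon
  push_neg at hcon
  apply hne
  -- S is "downward closed": every x ∈ S with 1 ≤ x has x - 1 ∈ S
  rcases S.eq_empty_or_nonempty with h | h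
  · subst h
    simp at hcard
    subst hcard
    simp
  · have hM := S.max'_mem h
    set M := S.max' h with hMdef
    have hdown : ∀ j : ℕ, (j : ℤ) ≤ M → M - j ∈ S := by
      intro j
      induction j with
      | zero => intro _; simpa using hM
      | succ p ih =>
        intro hp
        have hmem : M - p ∈ S := ih (by push_cast at hp ⊢; omega)
        have h1 : 1 ≤ M - p := by
          have := hpos _ hmem
          push_cast at hp ⊢
          -- need M - p ≥ 1; since p + 1 ≤ M
          omega
        have := hcon _ hmem h1
        convert this using 1
        push_cast
        ring
    have hSeq : S = Finset.Icc 0 M := by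
      apply Finset.Subset.antisymm
      · intro y hy
        exact Finset.mem_Icc.2 ⟨hpos y hy, S.le_max' y hy⟩
      · intro y hy
        rw [Finset.mem_Icc] at hy
        have : M - (M - y).toNat = y := by omega
        rw [← this]
        exact hdown (M - y).toNat (by omega)
    have hM0 : 0 ≤ M := hpos _ hM
    have : S.card = (M + 1).toNat := by
      rw [hSeq, Int.card_Icc]
      congr 1
      omega
    have : M = (n : ℤ) - 1 := by omega
    rw [hSeq, this]

lemma chain_to_canonical {k : ℤ} {n : ℕ} (hn : (n : ℤ) ≤ k + 1) :
    ∀ N : ℕ, ∀ S : Finset ℤ, (S.sum id).toNat ≤ N →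
    S ⊆ Finset.Icc 0 k → S.card = n → Chain k n S (Finset.Icc 0 ((n : ℤ) - 1)) := by
  have hcan_sub : Finset.Icc 0 ((n : ℤ) - 1) ⊆ Finset.Icc 0 k := by
    apply Finset.Icc_subset_Icc le_rfl
    omega
  have hcan_card : (Finset.Icc 0 ((n : ℤ) - 1)).card = n := by
    rw [Int.card_Icc]
    omega
  intro N
  induction N with
  | zero =>
    intro S hsum hS hcard
    by_cases heq : S = Finset.Icc 0 ((n : ℤ) - 1)
    · rw [heq]; exact chain_refl hcan_sub hcan_card
    · exfalso
      have hpos : ∀ x ∈ S, 0 ≤ x := fun x hx => (Finset.mem_Icc.1 (hS hx)).1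
      obtain ⟨x, hx, hx1, hx1'⟩ := exists_movable hcard hpos heq
      have hle : x ≤ S.sum id := Finset.single_le_sum (fun y hy => hpos y hy) hx
      omega
  | succ N ih =>
    intro S hsum hS hcard
    by_cases heq : S = Finset.Icc 0 ((n : ℤ) - 1)
    · rw [heq]; exact chain_refl hcan_sub hcan_card
    · have hpos : ∀ x ∈ S, 0 ≤ x := fun x hx => (Finset.mem_Icc.1 (hS hx)).1
      obtain ⟨x, hx, hx1, hx1'⟩ := exists_movable hcard hpos heq
      set S₁ := insert (x - 1) (S.erase x) with hS₁def
      have hx1e : x - 1 ∉ S.erase x := fun h => hx1' (Finset.mem_of_mem_erase h)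
      have hS₁sub : S₁ ⊆ Finset.Icc 0 k := by
        intro y hy
        rcases Finset.mem_insert.1 hy with h | h
        · have := Finset.mem_Icc.1 (hS hx)
          rw [h, Finset.mem_Icc]
          omega
        · exact hS (Finset.mem_of_mem_erase h)
      have hS₁card : S₁.card = n := by
        rw [hS₁def, Finset.card_insert_of_notMem hx1e, Finset.card_erase_of_mem hx, hcard]
        have : 1 ≤ n := by
          rcases Nat.eq_zero_or_pos n with h | h
          · exfalso; rw [h] at hcard
            exact absurd hx (by simp [Finset.card_eq_zero.1 hcard])
          · exact h
        omega
      have hsum₁ : S₁.sum id = S.sum id - 1 := by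
        rw [hS₁def, Finset.sum_insert hx1e, Finset.sum_erase_eq_sub hx]
        simp [id]
      have hsumpos : 1 ≤ S.sum id := by
        have hle : x ≤ S.sum id := Finset.single_le_sum (fun y hy => hpos y hy) hx
        omega
      have hrec : Chain k n S₁ (Finset.Icc 0 ((n : ℤ) - 1)) := by
        apply ih S₁ _ hS₁sub hS₁card
        omega
      refine chain_trans ?_ hrec
      refine ⟨1, fun i => if i = 0 then S else S₁, by simp, by simp, ?_, ?_⟩
      · intro i _
        by_cases h : i = 0 <;> simp [h, hS, hcard, hS₁sub, hS₁card]
      · intro i hi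
        have : i = 0 := by omega
        subst this
        simp only [if_pos rfl, if_neg (by omega : (1 : ℕ) ≠ 0)]
        exact Or.inr (isClose_step hx hx1')

/-- **Connectivity of the "closeness" graph.**
For `k ≥ 1` and `0 ≤ n ≤ k+1`, any two size-`n` subsets `S, S'` of `[0,k]` can be
joined by a finite chain `S = S₀, S₁, …, S_m = S'` of size-`n` subsets of `[0,k]`
in which consecutive subsets are equal or close. -/
theorem stmt_4 (k : ℤ) (hk : 1 ≤ k) (n : ℕ) (hn : (n : ℤ) ≤ k + 1)
    (S S' : Finset ℤ)
    (hS : S ⊆ Finset.Icc 0 k) (hS' : S' ⊆ Finset.Icc 0 k)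
    (hcardS : S.card = n) (hcardS' : S'.card = n) :
    ∃ (m : ℕ) (f : ℕ → Finset ℤ),
      f 0 = S ∧ f m = S' ∧
      (∀ i ≤ m, f i ⊆ Finset.Icc 0 k ∧ (f i).card = n) ∧
      (∀ i < m, f i = f (i + 1) ∨ IsClose (f i) (f (i + 1))) := by
  have h1 := chain_to_canonical hn (S.sum id).toNat S le_rfl hS hcardS
  have h2 := chain_to_canonical hn (S'.sum id).toNat S' le_rfl hS' hcardS'
  exact chain_trans h1 (chain_symm h2)
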